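/- Let 0 < q < 1 and η̂ = −log q > 0, and let h : ℝ → ℝ be 2π-periodic and integrable on [0,2π]. Set A₀ = (1/π)·∫₀^{2π} h(τ) dτ, and for each k ≥ 1 set A_k = (1/(π·cosh(k·η̂)))·∫₀^{2π} h(τ)·cos(kτ) dτ and D_k = (1/(π·sinh(k·η̂)))·∫₀^{2π} h(τ)·sin(kτ) dτ. Define g(η,φ) = A₀/2 + ∑_{k=1}^∞ [A_k·cosh(kη)·cos(kφ) + D_k·sinh(kη)·sin(kφ)]. Then g satisfies the Laplace equation ∂²g/∂η² + ∂²g/∂φ² = 0 at every point (η,φ) with |η| < η̂ and φ ∈ ℝ. -/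

import Mathlib

open Real

set_option maxHeartbeats 1600000

/-- the elliptic-coordinate Fourier series solution of the
Dirichlet problem satisfies the Laplace equation for `|η| < η̂`. -/
theorem elliptic_series_harmonic
    (q : ℝ) (hq0 : 0 < q) (hq1 : q < 1)
    (ηhat : ℝ) (hηhat : ηhat = -Real.log q)
    (h : ℝ → ℝ) (hper : Function.Periodic h (2 * π))
    (hint : IntervalIntegrable h MeasureTheory.volume 0 (2 * π))
    (A D : ℕ → ℝ)
    (hA0 : A 0 = (1 / π) * ∫ τ in (0 : ℝ)..(2 * π), h τ)
    (hA : ∀ k : ℕ, 1 ≤ k → A k =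
      (1 / (π * Real.cosh (k * ηhat))) * ∫ τ in (0 : ℝ)..(2 * π), h τ * Real.cos (k * τ))
    (hD : ∀ k : ℕ, 1 ≤ k → D k =
      (1 / (π * Real.sinh (k * ηhat))) * ∫ τ in (0 : ℝ)..(2 * π), h τ * Real.sin (k * τ))
    (g : ℝ → ℝ → ℝ)
    (hg : ∀ η φ : ℝ, g η φ = A 0 / 2 + ∑' k : ℕ,
      (A (k + 1) * Real.cosh (((k : ℝ) + 1) * η) * Real.cos (((k : ℝ) + 1) * φ)
        + D (k + 1) * Real.sinh (((k : ℝ) + 1) * η) * Real.sin (((k : ℝ) + 1) * φ)))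
    (η φ : ℝ) (hη : |η| < ηhat) :
    deriv (fun η' => deriv (fun η'' => g η'' φ) η') η
      + deriv (fun φ' => deriv (fun φ'' => g η φ'') φ') φ = 0 := by
  have hπ : (0:ℝ) < π := Real.pi_pos
  have hηhat0 : 0 < ηhat := by
    have := Real.log_neg hq0 hq1
    rw [hηhat]; linarith
  set r : ℝ := (|η| + ηhat) / 2 with hrdef
  have hr1 : |η| < r := by simp only [hrdef]; linarith
  have hr2 : r < ηhat := by simp only [hrdef]; linarith
  have hr0 : 0 < r := lt_of_le_of_lt (abs_nonneg η) hr1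
  set t : ℝ := Real.exp (r - ηhat) with htdef
  have ht0 : 0 < t := Real.exp_pos _
  have ht1 : t < 1 := by
    rw [htdef, Real.exp_lt_one_iff]; linarith
  set c : ℝ := (1 / π) * ∫ τ in (0:ℝ)..(2*π), |h τ| with hcdef
  have h2π : (0:ℝ) ≤ 2 * π := by positivity
  have habs_int : IntervalIntegrable (fun τ => |h τ|) MeasureTheory.volume 0 (2*π) := hint.abs
  have hc0 : 0 ≤ c := by
    have : 0 ≤ ∫ τ in (0:ℝ)..(2*π), |h τ| :=
      intervalIntegral.integral_nonneg h2π (fun x _ => abs_nonneg _)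
    positivity
  -- basic integral bound
  have ibound : ∀ w : ℝ → ℝ, Continuous w → (∀ x, |w x| ≤ 1) →
      |∫ τ in (0:ℝ)..(2*π), h τ * w τ| ≤ π * c := by
    intro w hw hw1
    have hmul : IntervalIntegrable (fun τ => h τ * w τ) MeasureTheory.volume 0 (2*π) :=
      hint.mul_continuousOn hw.continuousOn
    have h1 : |∫ τ in (0:ℝ)..(2*π), h τ * w τ| ≤ ∫ τ in (0:ℝ)..(2*π), |h τ * w τ| :=
      intervalIntegral.abs_integral_le_integral_abs h2π
    have h2 : (∫ τ in (0:ℝ)..(2*π), |h τ * w τ|) ≤ ∫ τ in (0:ℝ)..(2*π), |h τ| := by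
      apply intervalIntegral.integral_mono_on h2π hmul.abs habs_int
      intro x _
      rw [abs_mul]
      calc |h x| * |w x| ≤ |h x| * 1 := by
            exact mul_le_mul_of_nonneg_left (hw1 x) (abs_nonneg _)
        _ = |h x| := mul_one _
    have : π * c = ∫ τ in (0:ℝ)..(2*π), |h τ| := by
      rw [hcdef]; field_simp
    linarith
  -- ratio lemmas
  have hcosh_le_exp : ∀ x : ℝ, 0 ≤ x → Real.cosh x ≤ Real.exp x := by
    intro x hx
    rw [Real.cosh_eq]
    have : Real.exp (-x) ≤ Real.exp x := Real.exp_le_exp.2 (by linarith)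
    linarith
  set m : ℝ := (1 - Real.exp (-(2 * ηhat))) / 2 with hmdef
  have hm0 : 0 < m := by
    have : Real.exp (-(2*ηhat)) < 1 := by rw [Real.exp_lt_one_iff]; linarith
    rw [hmdef]; linarith
  -- bound on |A (k+1)| * cosh((k+1) r)
  have hAb : ∀ k : ℕ, |A (k+1)| * Real.cosh (((k:ℝ)+1) * r) ≤ 2 * c * t ^ (k+1) := by
    intro k
    set K : ℝ := (k:ℝ) + 1 with hKdef
    have hK1 : 1 ≤ K := by rw [hKdef]; linarith [Nat.cast_nonneg (α := ℝ) k]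
    have hKr0 : 0 ≤ K * r := by positivity
    have hb0 : 0 < K * ηhat := by positivity
    have hcoshb : 0 < Real.cosh (K * ηhat) := Real.cosh_pos _
    have hAk : A (k+1) = (1 / (π * Real.cosh (K * ηhat))) *
        ∫ τ in (0:ℝ)..(2*π), h τ * Real.cos (((k:ℕ)+1 : ℕ) * τ) := by
      have := hA (k+1) (by omega)
      rw [this]; push_cast; rfl
    have hAabs : |A (k+1)| ≤ c / Real.cosh (K * ηhat) := by
      rw [hAk, abs_mul]
      have hw : |∫ τ in (0:ℝ)..(2*π), h τ * Real.cos (((k:ℕ)+1 : ℕ) * τ)| ≤ π * c :=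
        ibound _ (Real.continuous_cos.comp (continuous_const.mul continuous_id)) (fun x => Real.abs_cos_le_one _)
      have hpos : 0 < π * Real.cosh (K * ηhat) := by positivity
      rw [abs_of_pos (by positivity : (0:ℝ) < 1 / (π * Real.cosh (K * ηhat)))]
      rw [div_eq_mul_inv c, mul_comm c]
      calc 1 / (π * Real.cosh (K * ηhat)) * |∫ τ in (0:ℝ)..(2*π), h τ * Real.cos (((k:ℕ)+1 : ℕ) * τ)|
          ≤ 1 / (π * Real.cosh (K * ηhat)) * (π * c) := by
            exact mul_le_mul_of_nonneg_left hw (by positivity)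
        _ = (Real.cosh (K * ηhat))⁻¹ * c := by field_simp
    have hexp : t ^ (k+1) = Real.exp (K * r) / Real.exp (K * ηhat) := by
      rw [htdef, ← Real.exp_nat_mul, ← Real.exp_sub]
      congr 1
      push_cast
      ring
    have h1 : Real.cosh (K * r) ≤ Real.exp (K * r) := hcosh_le_exp _ hKr0
    have h2 : Real.exp (K * ηhat) / 2 ≤ Real.cosh (K * ηhat) := by
      rw [Real.cosh_eq]
      have := (Real.exp_pos (-(K * ηhat))).le
      linarith
    calc |A (k+1)| * Real.cosh (K * r)
        ≤ (c / Real.cosh (K * ηhat)) * Real.exp (K * r) := by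
          apply mul_le_mul hAabs h1 (Real.cosh_pos _).le (by positivity)
      _ ≤ 2 * c * (Real.exp (K * r) / Real.exp (K * ηhat)) := by
          rw [div_mul_eq_mul_div, div_le_iff₀ hcoshb]
          have hh : 2 * c * (Real.exp (K * r) / Real.exp (K * ηhat)) * (Real.exp (K*ηhat)/2) ≤
              2 * c * (Real.exp (K * r) / Real.exp (K * ηhat)) * Real.cosh (K * ηhat) := by
            apply mul_le_mul_of_nonneg_left h2 (by positivity)
          have heq : 2 * c * (Real.exp (K * r) / Real.exp (K * ηhat)) * (Real.exp (K*ηhat)/2)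
              = c * Real.exp (K * r) := by
            field_simp
          linarith
      _ = 2 * c * t ^ (k+1) := by rw [hexp]
  -- bound on |D (k+1)| * cosh((k+1) r)
  have hDb : ∀ k : ℕ, |D (k+1)| * Real.cosh (((k:ℝ)+1) * r) ≤ (c / m) * t ^ (k+1) := by
    intro k
    set K : ℝ := (k:ℝ) + 1 with hKdef
    have hK1 : 1 ≤ K := by rw [hKdef]; linarith [Nat.cast_nonneg (α := ℝ) k]
    have hKr0 : 0 ≤ K * r := by positivity
    have hb1 : ηhat ≤ K * ηhat := by nlinarith
    have hsinhb : 0 < Real.sinh (K * ηhat) := by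
      rw [Real.sinh_pos_iff]; positivity
    have hDk : D (k+1) = (1 / (π * Real.sinh (K * ηhat))) *
        ∫ τ in (0:ℝ)..(2*π), h τ * Real.sin (((k:ℕ)+1 : ℕ) * τ) := by
      have := hD (k+1) (by omega)
      rw [this]; push_cast; rfl
    have hDabs : |D (k+1)| ≤ c / Real.sinh (K * ηhat) := by
      rw [hDk, abs_mul]
      have hw : |∫ τ in (0:ℝ)..(2*π), h τ * Real.sin (((k:ℕ)+1 : ℕ) * τ)| ≤ π * c :=
        ibound _ (Real.continuous_sin.comp (continuous_const.mul continuous_id)) (fun x => Real.abs_sin_le_one _)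
      rw [abs_of_pos (by positivity : (0:ℝ) < 1 / (π * Real.sinh (K * ηhat)))]
      calc 1 / (π * Real.sinh (K * ηhat)) * |∫ τ in (0:ℝ)..(2*π), h τ * Real.sin (((k:ℕ)+1 : ℕ) * τ)|
          ≤ 1 / (π * Real.sinh (K * ηhat)) * (π * c) := by
            exact mul_le_mul_of_nonneg_left hw (by positivity)
        _ = c / Real.sinh (K * ηhat) := by field_simp
    have hexp : t ^ (k+1) = Real.exp (K * r) / Real.exp (K * ηhat) := by
      rw [htdef, ← Real.exp_nat_mul, ← Real.exp_sub]
      congr 1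
      push_cast
      ring
    have h1 : Real.cosh (K * r) ≤ Real.exp (K * r) := hcosh_le_exp _ hKr0
    have h2 : m * Real.exp (K * ηhat) ≤ Real.sinh (K * ηhat) := by
      rw [Real.sinh_eq]
      have hsplit : Real.exp (-(K * ηhat)) = Real.exp (K * ηhat) * Real.exp (-(2 * (K * ηhat))) := by
        rw [← Real.exp_add]; ring_nf
      have hmono : Real.exp (-(2 * (K * ηhat))) ≤ Real.exp (-(2 * ηhat)) :=
        Real.exp_le_exp.2 (by linarith)
      rw [hmdef, hsplit]
      have hE := (Real.exp_pos (K * ηhat)).le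
      nlinarith [Real.exp_pos (K * ηhat)]
    calc |D (k+1)| * Real.cosh (K * r)
        ≤ (c / Real.sinh (K * ηhat)) * Real.exp (K * r) := by
          apply mul_le_mul hDabs h1 (Real.cosh_pos _).le (by positivity)
      _ ≤ (c / m) * (Real.exp (K * r) / Real.exp (K * ηhat)) := by
          rw [div_mul_eq_mul_div, div_le_iff₀ hsinhb]
          have hh : (c/m) * (Real.exp (K * r) / Real.exp (K * ηhat)) * (m * Real.exp (K * ηhat)) ≤
              (c/m) * (Real.exp (K * r) / Real.exp (K * ηhat)) * Real.sinh (K * ηhat) := by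
            apply mul_le_mul_of_nonneg_left h2 (by positivity)
          have heq : (c/m) * (Real.exp (K * r) / Real.exp (K * ηhat)) * (m * Real.exp (K * ηhat))
              = c * Real.exp (K * r) := by
            field_simp
          linarith
      _ = (c / m) * t ^ (k+1) := by rw [hexp]
  set B : ℝ := 2 * c + c / m with hBdef
  have hB0 : 0 ≤ B := by rw [hBdef]; positivity
  -- generic bound
  have gen : ∀ (k : ℕ) (S X Y : ℝ), 0 ≤ S →
      |X| ≤ S * Real.cosh (((k:ℝ)+1) * r) → |Y| ≤ S * Real.cosh (((k:ℝ)+1) * r) →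
      |A (k+1) * X + D (k+1) * Y| ≤ S * (B * t ^ (k+1)) := by
    intro k S X Y hS hX hY
    have hAk := hAb k
    have hDk := hDb k
    calc |A (k+1) * X + D (k+1) * Y| ≤ |A (k+1) * X| + |D (k+1) * Y| := abs_add_le _ _
      _ = |A (k+1)| * |X| + |D (k+1)| * |Y| := by rw [abs_mul, abs_mul]
      _ ≤ |A (k+1)| * (S * Real.cosh (((k:ℝ)+1) * r)) + |D (k+1)| * (S * Real.cosh (((k:ℝ)+1) * r)) := by
          apply add_le_add
          · exact mul_le_mul_of_nonneg_left hX (abs_nonneg _)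
          · exact mul_le_mul_of_nonneg_left hY (abs_nonneg _)
      _ = S * (|A (k+1)| * Real.cosh (((k:ℝ)+1) * r)) + S * (|D (k+1)| * Real.cosh (((k:ℝ)+1) * r)) := by
          ring
      _ ≤ S * (2 * c * t ^ (k+1)) + S * ((c / m) * t ^ (k+1)) := by
          apply add_le_add
          · exact mul_le_mul_of_nonneg_left hAk hS
          · exact mul_le_mul_of_nonneg_left hDk hS
      _ = S * (B * t ^ (k+1)) := by rw [hBdef]; ring
  -- summability of the majorants
  have hsum : ∀ j : ℕ, Summable (fun k : ℕ => ((k:ℝ)+1) ^ j * (B * t ^ (k+1))) := by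
    intro j
    have h0 : Summable (fun n : ℕ => (n:ℝ) ^ j * t ^ n) :=
      summable_pow_mul_geometric_of_norm_lt_one j (by rw [Real.norm_eq_abs, abs_of_pos ht0]; exact ht1)
    have h1 : Summable (fun k : ℕ => ((k+1:ℕ):ℝ) ^ j * t ^ (k+1)) :=
      (summable_nat_add_iff 1).mpr h0
    have h2 := h1.mul_left B
    apply h2.congr
    intro k
    push_cast
    ring
  -- auxiliary facts for pointwise bounds
  have hcoshx : ∀ (k : ℕ) (x : ℝ), |x| ≤ r → |Real.cosh (((k:ℝ)+1) * x)| ≤ Real.cosh (((k:ℝ)+1) * r) := by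
    intro k x hx
    have hK0 : (0:ℝ) ≤ (k:ℝ) + 1 := by positivity
    rw [abs_of_pos (Real.cosh_pos _), Real.cosh_le_cosh]
    rw [abs_mul, abs_of_nonneg hK0, abs_mul, abs_of_nonneg hK0, abs_of_pos hr0]
    exact mul_le_mul_of_nonneg_left hx hK0
  have hsinhx : ∀ (k : ℕ) (x : ℝ), |x| ≤ r → |Real.sinh (((k:ℝ)+1) * x)| ≤ Real.cosh (((k:ℝ)+1) * r) := by
    intro k x hx
    have hK0 : (0:ℝ) ≤ (k:ℝ) + 1 := by positivity
    rw [Real.abs_sinh]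
    calc Real.sinh |((k:ℝ)+1) * x| ≤ Real.sinh (((k:ℝ)+1) * r) := by
          rw [Real.sinh_le_sinh, abs_mul, abs_of_nonneg hK0]
          exact mul_le_mul_of_nonneg_left hx hK0
      _ ≤ Real.cosh (((k:ℝ)+1) * r) := (Real.sinh_lt_cosh _).le
  -- the term functions in the η-direction
  set f : ℕ → ℝ → ℝ := fun k y =>
    A (k+1) * Real.cosh (((k:ℝ)+1) * y) * Real.cos (((k:ℝ)+1) * φ)
      + D (k+1) * Real.sinh (((k:ℝ)+1) * y) * Real.sin (((k:ℝ)+1) * φ) with hfdef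
  set f1 : ℕ → ℝ → ℝ := fun k y =>
    A (k+1) * (Real.sinh (((k:ℝ)+1) * y) * ((k:ℝ)+1)) * Real.cos (((k:ℝ)+1) * φ)
      + D (k+1) * (Real.cosh (((k:ℝ)+1) * y) * ((k:ℝ)+1)) * Real.sin (((k:ℝ)+1) * φ) with hf1def
  set f2 : ℕ → ℝ → ℝ := fun k y =>
    A (k+1) * (Real.cosh (((k:ℝ)+1) * y) * ((k:ℝ)+1) * ((k:ℝ)+1)) * Real.cos (((k:ℝ)+1) * φ)
      + D (k+1) * (Real.sinh (((k:ℝ)+1) * y) * ((k:ℝ)+1) * ((k:ℝ)+1)) * Real.sin (((k:ℝ)+1) * φ) with hf2def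
  have hKder : ∀ (k : ℕ) (x : ℝ), HasDerivAt (fun y : ℝ => ((k:ℝ)+1) * y) ((k:ℝ)+1) x := by
    intro k x
    simpa using (hasDerivAt_id x).const_mul ((k:ℝ)+1)
  have hdf : ∀ (k : ℕ) (x : ℝ), HasDerivAt (f k) (f1 k x) x := by
    intro k x
    exact ((((hKder k x).cosh).const_mul (A (k+1))).mul_const (Real.cos (((k:ℝ)+1) * φ))).add
      ((((hKder k x).sinh).const_mul (D (k+1))).mul_const (Real.sin (((k:ℝ)+1) * φ)))
  have hdf1 : ∀ (k : ℕ) (x : ℝ), HasDerivAt (f1 k) (f2 k x) x := by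
    intro k x
    exact (((((hKder k x).sinh).mul_const ((k:ℝ)+1)).const_mul (A (k+1))).mul_const
        (Real.cos (((k:ℝ)+1) * φ))).add
      (((((hKder k x).cosh).mul_const ((k:ℝ)+1)).const_mul (D (k+1))).mul_const
        (Real.sin (((k:ℝ)+1) * φ)))
  -- bounds on f, f1, f2 on Ioo (-r) r
  have hbf : ∀ (k : ℕ) (x : ℝ), |x| ≤ r → |f k x| ≤ ((k:ℝ)+1) ^ 0 * (B * t ^ (k+1)) := by
    intro k x hx
    have : f k x = A (k+1) * (Real.cosh (((k:ℝ)+1) * x) * Real.cos (((k:ℝ)+1) * φ))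
        + D (k+1) * (Real.sinh (((k:ℝ)+1) * x) * Real.sin (((k:ℝ)+1) * φ)) := by
      simp only [hfdef]; ring
    rw [this]
    apply gen k _ _ _ (by positivity)
    · rw [abs_mul, pow_zero, one_mul]
      calc |Real.cosh (((k:ℝ)+1) * x)| * |Real.cos (((k:ℝ)+1) * φ)|
          ≤ Real.cosh (((k:ℝ)+1) * r) * 1 := by
            apply mul_le_mul (hcoshx k x hx) (Real.abs_cos_le_one _) (abs_nonneg _) (Real.cosh_pos _).le
        _ = Real.cosh (((k:ℝ)+1) * r) := mul_one _
    · rw [abs_mul, pow_zero, one_mul]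
      calc |Real.sinh (((k:ℝ)+1) * x)| * |Real.sin (((k:ℝ)+1) * φ)|
          ≤ Real.cosh (((k:ℝ)+1) * r) * 1 := by
            apply mul_le_mul (hsinhx k x hx) (Real.abs_sin_le_one _) (abs_nonneg _) (Real.cosh_pos _).le
        _ = Real.cosh (((k:ℝ)+1) * r) := mul_one _
  have hbf1 : ∀ (k : ℕ) (x : ℝ), |x| ≤ r → |f1 k x| ≤ ((k:ℝ)+1) ^ 1 * (B * t ^ (k+1)) := by
    intro k x hx
    have hK0 : (0:ℝ) ≤ (k:ℝ) + 1 := by positivity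
    have : f1 k x = A (k+1) * (Real.sinh (((k:ℝ)+1) * x) * ((k:ℝ)+1) * Real.cos (((k:ℝ)+1) * φ))
        + D (k+1) * (Real.cosh (((k:ℝ)+1) * x) * ((k:ℝ)+1) * Real.sin (((k:ℝ)+1) * φ)) := by
      simp only [hf1def]; ring
    rw [this]
    apply gen k _ _ _ (by positivity)
    · rw [pow_one, abs_mul, abs_mul, abs_of_nonneg hK0]
      calc |Real.sinh (((k:ℝ)+1) * x)| * ((k:ℝ)+1) * |Real.cos (((k:ℝ)+1) * φ)|
          ≤ Real.cosh (((k:ℝ)+1) * r) * ((k:ℝ)+1) * 1 := by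
            apply mul_le_mul _ (Real.abs_cos_le_one _) (abs_nonneg _) (by positivity)
            exact mul_le_mul_of_nonneg_right (hsinhx k x hx) hK0
        _ = ((k:ℝ)+1) * Real.cosh (((k:ℝ)+1) * r) := by ring
    · rw [pow_one, abs_mul, abs_mul, abs_of_nonneg hK0]
      calc |Real.cosh (((k:ℝ)+1) * x)| * ((k:ℝ)+1) * |Real.sin (((k:ℝ)+1) * φ)|
          ≤ Real.cosh (((k:ℝ)+1) * r) * ((k:ℝ)+1) * 1 := by
            apply mul_le_mul _ (Real.abs_sin_le_one _) (abs_nonneg _) (by positivity)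
            exact mul_le_mul_of_nonneg_right (hcoshx k x hx) hK0
        _ = ((k:ℝ)+1) * Real.cosh (((k:ℝ)+1) * r) := by ring
  have hbf2 : ∀ (k : ℕ) (x : ℝ), |x| ≤ r → |f2 k x| ≤ ((k:ℝ)+1) ^ 2 * (B * t ^ (k+1)) := by
    intro k x hx
    have hK0 : (0:ℝ) ≤ (k:ℝ) + 1 := by positivity
    have : f2 k x = A (k+1) * (Real.cosh (((k:ℝ)+1) * x) * (((k:ℝ)+1) * ((k:ℝ)+1)) * Real.cos (((k:ℝ)+1) * φ))
        + D (k+1) * (Real.sinh (((k:ℝ)+1) * x) * (((k:ℝ)+1) * ((k:ℝ)+1)) * Real.sin (((k:ℝ)+1) * φ)) := by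
      simp only [hf2def]; ring
    rw [this]
    apply gen k _ _ _ (by positivity)
    · rw [abs_mul, abs_mul, abs_of_nonneg (by positivity : (0:ℝ) ≤ ((k:ℝ)+1) * ((k:ℝ)+1))]
      calc |Real.cosh (((k:ℝ)+1) * x)| * (((k:ℝ)+1) * ((k:ℝ)+1)) * |Real.cos (((k:ℝ)+1) * φ)|
          ≤ Real.cosh (((k:ℝ)+1) * r) * (((k:ℝ)+1) * ((k:ℝ)+1)) * 1 := by
            apply mul_le_mul _ (Real.abs_cos_le_one _) (abs_nonneg _) (by positivity)
            exact mul_le_mul_of_nonneg_right (hcoshx k x hx) (by positivity)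
        _ = ((k:ℝ)+1) ^ 2 * Real.cosh (((k:ℝ)+1) * r) := by ring
    · rw [abs_mul, abs_mul, abs_of_nonneg (by positivity : (0:ℝ) ≤ ((k:ℝ)+1) * ((k:ℝ)+1))]
      calc |Real.sinh (((k:ℝ)+1) * x)| * (((k:ℝ)+1) * ((k:ℝ)+1)) * |Real.sin (((k:ℝ)+1) * φ)|
          ≤ Real.cosh (((k:ℝ)+1) * r) * (((k:ℝ)+1) * ((k:ℝ)+1)) * 1 := by
            apply mul_le_mul _ (Real.abs_sin_le_one _) (abs_nonneg _) (by positivity)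
            exact mul_le_mul_of_nonneg_right (hsinhx k x hx) (by positivity)
        _ = ((k:ℝ)+1) ^ 2 * Real.cosh (((k:ℝ)+1) * r) := by ring
  -- the open interval
  have hsopen : IsOpen (Set.Ioo (-r) r) := isOpen_Ioo
  have hsconn : IsPreconnected (Set.Ioo (-r) r) := isPreconnected_Ioo
  have hmem : ∀ x ∈ Set.Ioo (-r) r, |x| ≤ r := by
    intro x hx
    exact (abs_lt.2 ⟨hx.1, hx.2⟩).le
  have hηmem : η ∈ Set.Ioo (-r) r := by
    rcases abs_lt.1 hr1 with ⟨h1, h2⟩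
    exact ⟨h1, h2⟩
  -- summability of f at η
  have hsumf : Summable (fun k => f k η) := by
    apply Summable.of_norm_bounded (hsum 0)
    intro k
    rw [Real.norm_eq_abs]
    exact hbf k η (hmem η hηmem)
  -- first derivative in η on the interval
  have hD1 : ∀ x ∈ Set.Ioo (-r) r,
      HasDerivAt (fun y => ∑' k, f k y) (∑' k, f1 k x) x := by
    intro x hx
    apply hasDerivAt_tsum_of_isPreconnected (hsum 1) hsopen hsconn
      (fun k y hy => hdf k y) (fun k y hy => ?_) hηmem hsumf hx
    rw [Real.norm_eq_abs]
    exact hbf1 k y (hmem y hy)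
  -- summability of f1 at η
  have hsumf1 : Summable (fun k => f1 k η) := by
    apply Summable.of_norm_bounded (hsum 1)
    intro k
    rw [Real.norm_eq_abs]
    exact hbf1 k η (hmem η hηmem)
  -- second derivative in η
  have hD2 : HasDerivAt (fun y => ∑' k, f1 k y) (∑' k, f2 k η) η := by
    apply hasDerivAt_tsum_of_isPreconnected (hsum 2) hsopen hsconn
      (fun k y hy => hdf1 k y) (fun k y hy => ?_) hηmem hsumf1 hηmem
    rw [Real.norm_eq_abs]
    exact hbf2 k y (hmem y hy)
  -- the inner η-derivative equals the term-by-term series on the interval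
  have hinner : ∀ x ∈ Set.Ioo (-r) r,
      deriv (fun η'' => g η'' φ) x = ∑' k, f1 k x := by
    intro x hx
    have heq : (fun η'' => g η'' φ) = fun y => A 0 / 2 + ∑' k, f k y := by
      funext y
      rw [hg y φ]
    rw [heq]
    have := ((hD1 x hx).const_add (A 0 / 2)).deriv
    simpa using this
  have houter : deriv (fun η' => deriv (fun η'' => g η'' φ) η') η = ∑' k, f2 k η := by
    have heq : (fun η' => deriv (fun η'' => g η'' φ) η') =ᶠ[nhds η] (fun y => ∑' k, f1 k y) := by
      filter_upwards [hsopen.mem_nhds hηmem] with x hx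
      exact hinner x hx
    rw [heq.deriv_eq]
    exact hD2.deriv
  -- φ-direction
  set p : ℕ → ℝ → ℝ := fun k y =>
    A (k+1) * Real.cosh (((k:ℝ)+1) * η) * Real.cos (((k:ℝ)+1) * y)
      + D (k+1) * Real.sinh (((k:ℝ)+1) * η) * Real.sin (((k:ℝ)+1) * y) with hpdef
  set p1 : ℕ → ℝ → ℝ := fun k y =>
    A (k+1) * Real.cosh (((k:ℝ)+1) * η) * (-Real.sin (((k:ℝ)+1) * y) * ((k:ℝ)+1))
      + D (k+1) * Real.sinh (((k:ℝ)+1) * η) * (Real.cos (((k:ℝ)+1) * y) * ((k:ℝ)+1)) with hp1def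
  set p2 : ℕ → ℝ → ℝ := fun k y =>
    A (k+1) * Real.cosh (((k:ℝ)+1) * η) * (-(Real.cos (((k:ℝ)+1) * y) * ((k:ℝ)+1)) * ((k:ℝ)+1))
      + D (k+1) * Real.sinh (((k:ℝ)+1) * η) * (-Real.sin (((k:ℝ)+1) * y) * ((k:ℝ)+1) * ((k:ℝ)+1)) with hp2def
  have hdp : ∀ (k : ℕ) (y : ℝ), HasDerivAt (p k) (p1 k y) y := by
    intro k y
    exact (((hKder k y).cos).const_mul (A (k+1) * Real.cosh (((k:ℝ)+1) * η))).add
      (((hKder k y).sin).const_mul (D (k+1) * Real.sinh (((k:ℝ)+1) * η)))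
  have hdp1 : ∀ (k : ℕ) (y : ℝ), HasDerivAt (p1 k) (p2 k y) y := by
    intro k y
    exact ((((hKder k y).sin.neg).mul_const ((k:ℝ)+1)).const_mul
        (A (k+1) * Real.cosh (((k:ℝ)+1) * η))).add
      ((((hKder k y).cos).mul_const ((k:ℝ)+1)).const_mul
        (D (k+1) * Real.sinh (((k:ℝ)+1) * η)))
  -- bounds for p, p1, p2 (valid for all y)
  have hbp : ∀ (k : ℕ) (y : ℝ), |p k y| ≤ ((k:ℝ)+1) ^ 0 * (B * t ^ (k+1)) := by
    intro k y
    have : p k y = A (k+1) * (Real.cosh (((k:ℝ)+1) * η) * Real.cos (((k:ℝ)+1) * y))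
        + D (k+1) * (Real.sinh (((k:ℝ)+1) * η) * Real.sin (((k:ℝ)+1) * y)) := by
      simp only [hpdef]; ring
    rw [this]
    apply gen k _ _ _ (by positivity)
    · rw [abs_mul, pow_zero, one_mul]
      calc |Real.cosh (((k:ℝ)+1) * η)| * |Real.cos (((k:ℝ)+1) * y)|
          ≤ Real.cosh (((k:ℝ)+1) * r) * 1 := by
            apply mul_le_mul (hcoshx k η hr1.le) (Real.abs_cos_le_one _) (abs_nonneg _) (Real.cosh_pos _).le
        _ = Real.cosh (((k:ℝ)+1) * r) := mul_one _
    · rw [abs_mul, pow_zero, one_mul]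
      calc |Real.sinh (((k:ℝ)+1) * η)| * |Real.sin (((k:ℝ)+1) * y)|
          ≤ Real.cosh (((k:ℝ)+1) * r) * 1 := by
            apply mul_le_mul (hsinhx k η hr1.le) (Real.abs_sin_le_one _) (abs_nonneg _) (Real.cosh_pos _).le
        _ = Real.cosh (((k:ℝ)+1) * r) := mul_one _
  have hbp1 : ∀ (k : ℕ) (y : ℝ), |p1 k y| ≤ ((k:ℝ)+1) ^ 1 * (B * t ^ (k+1)) := by
    intro k y
    have hK0 : (0:ℝ) ≤ (k:ℝ) + 1 := by positivity
    have : p1 k y = A (k+1) * (Real.cosh (((k:ℝ)+1) * η) * (-Real.sin (((k:ℝ)+1) * y)) * ((k:ℝ)+1))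
        + D (k+1) * (Real.sinh (((k:ℝ)+1) * η) * Real.cos (((k:ℝ)+1) * y) * ((k:ℝ)+1)) := by
      simp only [hp1def]; ring
    rw [this]
    apply gen k _ _ _ (by positivity)
    · rw [pow_one, abs_mul, abs_mul, abs_of_nonneg hK0, abs_neg]
      calc |Real.cosh (((k:ℝ)+1) * η)| * |Real.sin (((k:ℝ)+1) * y)| * ((k:ℝ)+1)
          ≤ (Real.cosh (((k:ℝ)+1) * r) * 1) * ((k:ℝ)+1) := by
            apply mul_le_mul_of_nonneg_right _ hK0
            exact mul_le_mul (hcoshx k η hr1.le) (Real.abs_sin_le_one _) (abs_nonneg _) (Real.cosh_pos _).le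
        _ = ((k:ℝ)+1) * Real.cosh (((k:ℝ)+1) * r) := by ring
    · rw [pow_one, abs_mul, abs_mul, abs_of_nonneg hK0]
      calc |Real.sinh (((k:ℝ)+1) * η)| * |Real.cos (((k:ℝ)+1) * y)| * ((k:ℝ)+1)
          ≤ (Real.cosh (((k:ℝ)+1) * r) * 1) * ((k:ℝ)+1) := by
            apply mul_le_mul_of_nonneg_right _ hK0
            exact mul_le_mul (hsinhx k η hr1.le) (Real.abs_cos_le_one _) (abs_nonneg _) (Real.cosh_pos _).le
        _ = ((k:ℝ)+1) * Real.cosh (((k:ℝ)+1) * r) := by ring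
  have hsump : Summable (fun k => p k φ) := by
    apply Summable.of_norm_bounded (hsum 0)
    intro k
    rw [Real.norm_eq_abs]
    exact hbp k φ
  have hsump1 : Summable (fun k => p1 k φ) := by
    apply Summable.of_norm_bounded (hsum 1)
    intro k
    rw [Real.norm_eq_abs]
    exact hbp1 k φ
  have hP1 : ∀ y : ℝ, HasDerivAt (fun z => ∑' k, p k z) (∑' k, p1 k y) y := by
    intro y
    exact hasDerivAt_tsum (hsum 1) (fun k z => hdp k z)
      (fun k z => by rw [Real.norm_eq_abs]; exact hbp1 k z) hsump y
  have hbp2 : ∀ (k : ℕ) (y : ℝ), |p2 k y| ≤ ((k:ℝ)+1) ^ 2 * (B * t ^ (k+1)) := by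
    intro k y
    have hK0 : (0:ℝ) ≤ (k:ℝ) + 1 := by positivity
    have : p2 k y = A (k+1) * (Real.cosh (((k:ℝ)+1) * η) * (-Real.cos (((k:ℝ)+1) * y)) * (((k:ℝ)+1) * ((k:ℝ)+1)))
        + D (k+1) * (Real.sinh (((k:ℝ)+1) * η) * (-Real.sin (((k:ℝ)+1) * y)) * (((k:ℝ)+1) * ((k:ℝ)+1))) := by
      simp only [hp2def]; ring
    rw [this]
    apply gen k _ _ _ (by positivity)
    · rw [abs_mul, abs_mul, abs_of_nonneg (by positivity : (0:ℝ) ≤ ((k:ℝ)+1) * ((k:ℝ)+1)), abs_neg]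
      calc |Real.cosh (((k:ℝ)+1) * η)| * |Real.cos (((k:ℝ)+1) * y)| * (((k:ℝ)+1) * ((k:ℝ)+1))
          ≤ (Real.cosh (((k:ℝ)+1) * r) * 1) * (((k:ℝ)+1) * ((k:ℝ)+1)) := by
            apply mul_le_mul_of_nonneg_right _ (by positivity)
            exact mul_le_mul (hcoshx k η hr1.le) (Real.abs_cos_le_one _) (abs_nonneg _) (Real.cosh_pos _).le
        _ = ((k:ℝ)+1) ^ 2 * Real.cosh (((k:ℝ)+1) * r) := by ring
    · rw [abs_mul, abs_mul, abs_of_nonneg (by positivity : (0:ℝ) ≤ ((k:ℝ)+1) * ((k:ℝ)+1)), abs_neg]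
      calc |Real.sinh (((k:ℝ)+1) * η)| * |Real.sin (((k:ℝ)+1) * y)| * (((k:ℝ)+1) * ((k:ℝ)+1))
          ≤ (Real.cosh (((k:ℝ)+1) * r) * 1) * (((k:ℝ)+1) * ((k:ℝ)+1)) := by
            apply mul_le_mul_of_nonneg_right _ (by positivity)
            exact mul_le_mul (hsinhx k η hr1.le) (Real.abs_sin_le_one _) (abs_nonneg _) (Real.cosh_pos _).le
        _ = ((k:ℝ)+1) ^ 2 * Real.cosh (((k:ℝ)+1) * r) := by ring
  have hP2 : HasDerivAt (fun z => ∑' k, p1 k z) (∑' k, p2 k φ) φ := by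
    exact hasDerivAt_tsum (hsum 2) (fun k z => hdp1 k z)
      (fun k z => by rw [Real.norm_eq_abs]; exact hbp2 k z) hsump1 φ
  have hinnerφ : ∀ y : ℝ, deriv (fun φ'' => g η φ'') y = ∑' k, p1 k y := by
    intro y
    have heq : (fun φ'' => g η φ'') = fun z => A 0 / 2 + ∑' k, p k z := by
      funext z
      rw [hg η z]
    rw [heq]
    have := ((hP1 y).const_add (A 0 / 2)).deriv
    simpa using this
  have houterφ : deriv (fun φ' => deriv (fun φ'' => g η φ'') φ') φ = ∑' k, p2 k φ := by
    have heq : (fun φ' => deriv (fun φ'' => g η φ'') φ') = (fun z => ∑' k, p1 k z) := by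
      funext y
      exact hinnerφ y
    rw [heq]
    exact hP2.deriv
  -- conclude
  rw [houter, houterφ]
  have hptwise : ∀ k : ℕ, p2 k φ = -(f2 k η) := by
    intro k
    simp only [hp2def, hf2def]
    ring
  have : (∑' k, p2 k φ) = -(∑' k, f2 k η) := by
    rw [tsum_congr hptwise, tsum_neg]
  rw [this]
  ring
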